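/- (Williamson normal form, existence) For every 2n×2n real symmetric positive definite matrix Σ there exist a symplectic matrix M and positive real numbers ε₁,...,ε_n such that M·Σ·Mᵀ = diag(Λ,Λ) with Λ = diag(ε₁,...,ε_n). -/

import Mathlib

open Matrix Polynomial
open scoped RealInnerProductSpace MatrixOrder

noncomputable section

/-- The 2×2 standard symplectic matrix. -/
def J2 : Matrix (Fin 2) (Fin 2) ℝ := !![0, 1; -1, 0]

/-- The 2n×2n block-diagonal symplectic matrix `diag(J₂, ..., J₂)`. -/
def Jblock (n : ℕ) : Matrix (Fin (2 * n)) (Fin (2 * n)) ℝ :=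
  fun i j =>
    if i.val / 2 = j.val / 2 then
      J2 ⟨i.val % 2, by omega⟩ ⟨j.val % 2, by omega⟩
    else 0

/-- The 2×2 block of a 2n×2n matrix at block position (m, k). -/
def blk {n : ℕ} (A : Matrix (Fin (2 * n)) (Fin (2 * n)) ℝ) (m k : Fin n) :
    Matrix (Fin 2) (Fin 2) ℝ :=
  fun i j =>
    A ⟨2 * m.val + i.val, by have := m.isLt; have := i.isLt; omega⟩
      ⟨2 * k.val + j.val, by have := k.isLt; have := j.isLt; omega⟩

/-- `S` has eigenemittances `ε`: the spectrum of `S · J_{2n}` (over ℂ, with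
multiplicity) is `±iε₁, ..., ±iε_n`. -/
def hasEigenemittances {n : ℕ} (S : Matrix (Fin (2 * n)) (Fin (2 * n)) ℝ)
    (ε : Fin n → ℝ) : Prop :=
  ((S * Jblock n).map (Complex.ofReal)).charpoly =
    ∏ m : Fin n, ((X - C (Complex.I * (ε m : ℂ))) * (X + C (Complex.I * (ε m : ℂ))))

/-- The standard 2n×2n symplectic form in the `(q₁,...,q_n,p₁,...,p_n)` ordering. -/
def Jstd (n : ℕ) : Matrix (Fin n ⊕ Fin n) (Fin n ⊕ Fin n) ℝ :=
  Matrix.fromBlocks 0 1 (-1) 0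

/-- Canonical form of an injective skew-adjoint endomorphism of a real inner product
space of even dimension. -/
lemma skew_canonical : ∀ (m : ℕ) (E : Type) (_ : NormedAddCommGroup E)
    (_ : @InnerProductSpace ℝ E _ _) (_ : FiniteDimensional ℝ E),
    Module.finrank ℝ E = 2 * m →
    ∀ (T : E →ₗ[ℝ] E), (∀ x y : E, ⟪T x, y⟫ = -⟪x, T y⟫) → Function.Injective T →
    ∃ (v : (Fin m ⊕ Fin m) → E) (d : Fin m → ℝ),
      Orthonormal ℝ v ∧ (∀ i, 0 < d i) ∧
      (∀ i, T (v (Sum.inl i)) = -(d i) • v (Sum.inr i)) ∧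
      (∀ i, T (v (Sum.inr i)) = d i • v (Sum.inl i)) := by
  intro m
  induction m with
  | zero =>
    intro E _ _ _ _ T _ _
    refine ⟨Sum.elim Fin.elim0 Fin.elim0, Fin.elim0, ?_, fun i => i.elim0,
      fun i => i.elim0, fun i => i.elim0⟩
    rw [orthonormal_iff_ite]
    rintro (i | i) <;> exact i.elim0
  | succ m IH =>
    intro E _ _ _ hrank T hskew hinj
    have hnt : Nontrivial E :=
      Module.nontrivial_of_finrank_pos (R := ℝ) (M := E) (by omega)
    set B : E →ₗ[ℝ] E := -(T ∘ₗ T) with hB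
    have hBapp : ∀ a, B a = -(T (T a)) := fun a => rfl
    have hBsymm : B.IsSymmetric := by
      intro a b
      simp only [hBapp, inner_neg_left, inner_neg_right]
      rw [hskew (T a) b, hskew a (T b)]
      ring
    obtain ⟨μ, hμ⟩ : ∃ μ, Module.End.HasEigenvalue B μ :=
      ⟨_, hBsymm.hasEigenvalue_iSup_of_finiteDimensional⟩
    obtain ⟨x₀, hev⟩ := hμ.exists_hasEigenvector
    set x : E := ‖x₀‖⁻¹ • x₀ with hx
    have hxnorm : ‖x‖ = 1 := norm_smul_inv_norm hev.right
    have hxB : B x = μ • x := by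
      rw [hx, _root_.map_smul, hev.apply_eq_smul, smul_comm]
    have hxne : x ≠ 0 := by
      intro h; rw [h, norm_zero] at hxnorm; norm_num at hxnorm
    have hinx : ∀ z : E, ⟪T z, z⟫ = 0 := by
      intro z
      have h := hskew z z
      rw [real_inner_comm (T z) z] at h
      linarith
    have hTTx : T (T x) = -(μ • x) := by
      have := hxB; rw [hBapp] at this
      linear_combination (norm := module) -this
    have hxx : ⟪x, x⟫ = 1 := by
      rw [real_inner_self_eq_norm_sq, hxnorm]; norm_num
    have hTx : ⟪T x, T x⟫ = μ := by
      rw [hskew x (T x), hTTx, inner_neg_right, inner_smul_right, neg_neg, hxx, mul_one]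
    have hμpos : 0 < μ := by
      rw [← hTx]
      have hz : T x ≠ 0 := fun h => hxne (hinj (by simpa using h))
      rw [real_inner_self_eq_norm_sq]
      exact pow_pos (norm_pos_iff.mpr hz) 2
    set c : ℝ := Real.sqrt μ with hcdef
    have hcpos : 0 < c := Real.sqrt_pos.mpr hμpos
    have hc2 : c * c = μ := Real.mul_self_sqrt hμpos.le
    set y : E := c⁻¹ • T x with hy
    have hTxy : T x = c • y := by
      rw [hy, smul_smul, mul_inv_cancel₀ hcpos.ne', one_smul]
    have hTy : T y = -c • x := by
      rw [hy, _root_.map_smul, hTTx, smul_neg, smul_smul]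
      rw [show c⁻¹ * μ = c by field_simp [← hc2]; linear_combination -hc2]
      module
    have hyy : ⟪y, y⟫ = 1 := by
      rw [hy, real_inner_smul_left, real_inner_smul_right, hTx]
      field_simp [← hc2]
      linear_combination -hc2
    have hynorm : ‖y‖ = 1 := by
      have h := real_inner_self_eq_norm_sq y
      rw [hyy] at h
      nlinarith [norm_nonneg y]
    have hxy : ⟪x, y⟫ = 0 := by
      rw [hy, real_inner_smul_right, real_inner_comm, hinx, mul_zero]
    have hyx : ⟪y, x⟫ = 0 := by rw [real_inner_comm]; exact hxy
    -- the orthogonal complement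
    set K : Submodule ℝ E := Submodule.span ℝ (Set.range ![x, y]) with hK
    have honxy : Orthonormal ℝ ![x, y] := by
      rw [orthonormal_iff_ite]
      intro i j
      fin_cases i <;> fin_cases j
      · simpa using hxx
      · simpa using hxy
      · simpa using hyx
      · simpa using hyy
    have hrkK : Module.finrank ℝ K = 2 := by
      rw [hK, finrank_span_eq_card honxy.linearIndependent]
      simp
    set W : Submodule ℝ E := Kᗮ with hW
    have memW : ∀ z : E, z ∈ W ↔ ⟪x, z⟫ = 0 ∧ ⟪y, z⟫ = 0 := by
      intro z
      constructor
      · intro hz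
        exact ⟨hz x (Submodule.subset_span ⟨0, rfl⟩),
          hz y (Submodule.subset_span ⟨1, rfl⟩)⟩
      · rintro ⟨h1, h2⟩
        intro u hu
        induction hu using Submodule.span_induction with
        | mem u hu =>
          obtain ⟨i, rfl⟩ := hu
          fin_cases i
          · exact h1
          · exact h2
        | zero => simp
        | add a b _ _ ha hb => rw [inner_add_left, ha, hb, add_zero]
        | smul r a _ ha => rw [real_inner_smul_left, ha, mul_zero]
    have hrkW : Module.finrank ℝ W = 2 * m := by
      have := Submodule.finrank_add_finrank_orthogonal K
      rw [hrkK, hrank, ← hW] at this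
      omega
    have hTW : ∀ z ∈ W, T z ∈ W := by
      intro z hz
      obtain ⟨h1, h2⟩ := (memW z).mp hz
      rw [memW]
      constructor
      · have h := hskew x z
        rw [hTxy, real_inner_smul_left, h2, mul_zero] at h
        linarith
      · have h := hskew y z
        rw [hTy, real_inner_smul_left, h1] at h
        have : (-c) * 0 = 0 := mul_zero _
        rw [this] at h
        linarith
    set T' : W →ₗ[ℝ] W := T.restrict hTW with hT'
    have hT'coe : ∀ z : W, (T' z : E) = T z := fun z => rfl
    have hskew' : ∀ a b : W, ⟪T' a, b⟫ = -⟪a, T' b⟫ := by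
      intro a b
      rw [Submodule.coe_inner, Submodule.coe_inner, hT'coe, hT'coe]
      exact hskew a b
    have hinj' : Function.Injective T' := by
      intro a b h
      apply Subtype.ext
      apply hinj
      rw [← hT'coe, ← hT'coe, h]
    obtain ⟨v', d', hon', hd', hTl', hTr'⟩ :=
      IH W inferInstance inferInstance inferInstance hrkW T' hskew' hinj'
    have hxv' : ∀ k, ⟪x, (v' k : E)⟫ = 0 := fun k => ((memW _).mp (v' k).2).1
    have hyv' : ∀ k, ⟪y, (v' k : E)⟫ = 0 := fun k => ((memW _).mp (v' k).2).2
    have hv'x : ∀ k, ⟪(v' k : E), x⟫ = 0 := fun k => by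
      rw [real_inner_comm]; exact hxv' k
    have hv'y : ∀ k, ⟪(v' k : E), y⟫ = 0 := fun k => by
      rw [real_inner_comm]; exact hyv' k
    have hon'' : ∀ k l, ⟪(v' k : E), (v' l : E)⟫ = if k = l then 1 else 0 := by
      intro k l
      rw [← Submodule.coe_inner]
      exact orthonormal_iff_ite.mp hon' k l
    refine ⟨Sum.elim (Fin.cons y fun i => (v' (Sum.inl i) : E))
      (Fin.cons x fun i => (v' (Sum.inr i) : E)), Fin.cons c d', ?_, ?_, ?_, ?_⟩
    · have h0s : ∀ l : Fin m, ((0 : Fin (m + 1)) = l.succ) = False := fun l => by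
        simp [(Fin.succ_ne_zero l).symm]
      rw [orthonormal_iff_ite]
      rintro (i | i) (j | j) <;>
        rcases Fin.eq_zero_or_eq_succ i with rfl | ⟨k, rfl⟩ <;>
        rcases Fin.eq_zero_or_eq_succ j with rfl | ⟨l, rfl⟩ <;>
        simp [hyy, hxx, hxy, hyx, hxv', hyv', hv'x, hv'y, hon'', Fin.succ_ne_zero, h0s, hxnorm, hynorm]
    · intro i
      rcases Fin.eq_zero_or_eq_succ i with rfl | ⟨k, rfl⟩
      · simpa using hcpos
      · simpa using hd' k
    · intro i
      rcases Fin.eq_zero_or_eq_succ i with rfl | ⟨k, rfl⟩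
      · simp only [Sum.elim_inl, Sum.elim_inr, Fin.cons_zero]
        rw [hTy]
      · simp only [Sum.elim_inl, Sum.elim_inr, Fin.cons_succ]
        have h := congrArg (Subtype.val) (hTl' k)
        rw [hT'coe] at h
        rw [h]
        push_cast
        module
    · intro i
      rcases Fin.eq_zero_or_eq_succ i with rfl | ⟨k, rfl⟩
      · simp only [Sum.elim_inl, Sum.elim_inr, Fin.cons_zero]
        rw [hTxy]
      · simp only [Sum.elim_inl, Sum.elim_inr, Fin.cons_succ]
        have h := congrArg (Subtype.val) (hTr' k)
        rw [hT'coe] at h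
        rw [h]
        push_cast
        module

/-- Williamson normal form, existence: every symmetric positive definite `S` can be
symplectically congruent-diagonalized as `M S Mᵀ = diag(Λ, Λ)`. -/
theorem stmt8 (n : ℕ) (S : Matrix (Fin n ⊕ Fin n) (Fin n ⊕ Fin n) ℝ) (hS : S.PosDef) :
    ∃ (M : Matrix (Fin n ⊕ Fin n) (Fin n ⊕ Fin n) ℝ) (ε : Fin n → ℝ),
      M * Jstd n * Mᵀ = Jstd n ∧ (∀ m, 0 < ε m) ∧
      M * S * Mᵀ =
        Matrix.fromBlocks (Matrix.diagonal ε) 0 0 (Matrix.diagonal ε) := by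
  classical
  -- square root of S
  have hs : S.PosSemidef := hS.posSemidef
  set Q : Matrix (Fin n ⊕ Fin n) (Fin n ⊕ Fin n) ℝ := CFC.sqrt S with hQ
  have hQQ : Q * Q = S := CFC.sqrt_mul_sqrt_self S hs.nonneg
  have hQsym : Qᵀ = Q := by
    have := (CFC.sqrt_nonneg S).posSemidef.1
    rwa [Matrix.IsHermitian, Matrix.conjTranspose_eq_transpose_of_trivial] at this
  have hdetS : S.det ≠ 0 := hS.det_pos.ne'
  have hdetQ : Q.det ≠ 0 := by
    intro h
    rw [← hQQ, Matrix.det_mul, h, mul_zero] at hdetS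
    exact hdetS rfl
  set R : Matrix (Fin n ⊕ Fin n) (Fin n ⊕ Fin n) ℝ := Q⁻¹ with hR
  have hRQ : R * Q = 1 := Matrix.nonsing_inv_mul Q (isUnit_iff_ne_zero.mpr hdetQ)
  have hQR : Q * R = 1 := Matrix.mul_nonsing_inv Q (isUnit_iff_ne_zero.mpr hdetQ)
  have hRsym : Rᵀ = R := by rw [hR, Matrix.transpose_nonsing_inv, hQsym]
  have hRSR : R * (S * R) = 1 := by
    rw [← hQQ, show Q * Q * R = Q * (Q * R) from Matrix.mul_assoc Q Q R, hQR,
      Matrix.mul_one, hRQ]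
  -- the skew matrix A
  set A : Matrix (Fin n ⊕ Fin n) (Fin n ⊕ Fin n) ℝ := R * Jstd n * R with hA
  have hJT : (Jstd n)ᵀ = -(Jstd n) := by
    simp [Jstd, Matrix.fromBlocks_transpose, Matrix.fromBlocks_neg]
  have hAT : Aᵀ = -A := by
    rw [hA, Matrix.transpose_mul, Matrix.transpose_mul, hRsym, hJT]
    simp [Matrix.mul_assoc]
  have hJJ : Jstd n * (Jstd n)ᵀ = 1 := by
    rw [hJT, Matrix.mul_neg]
    simp [Jstd, Matrix.fromBlocks_multiply, Matrix.fromBlocks_neg,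
      Matrix.fromBlocks_one]
  have hdetJ : (Jstd n).det ≠ 0 := by
    intro h
    have := congrArg Matrix.det hJJ
    rw [Matrix.det_mul, h, zero_mul, Matrix.det_one] at this
    norm_num at this
  have hdetR : R.det ≠ 0 := by
    rw [hR, Matrix.det_nonsing_inv]
    simpa using hdetQ
  have hdetA : A.det ≠ 0 := by
    rw [hA, Matrix.det_mul, Matrix.det_mul]
    exact mul_ne_zero (mul_ne_zero hdetR hdetJ) hdetR
  -- pass to Euclidean space
  set T : EuclideanSpace ℝ (Fin n ⊕ Fin n) →ₗ[ℝ] EuclideanSpace ℝ (Fin n ⊕ Fin n) :=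
    Matrix.toEuclideanLin A with hT
  have hTapp : ∀ (z : EuclideanSpace ℝ (Fin n ⊕ Fin n)) (k : Fin n ⊕ Fin n),
      T z k = (A *ᵥ (fun i => z i)) k := fun z k => rfl
  have hswap : ∀ u w : (Fin n ⊕ Fin n) → ℝ, (A *ᵥ u) ⬝ᵥ w = -(u ⬝ᵥ (A *ᵥ w)) := by
    intro u w
    rw [dotProduct_comm, Matrix.dotProduct_mulVec, ← Matrix.mulVec_transpose,
      hAT, Matrix.neg_mulVec, neg_dotProduct, dotProduct_comm]
  have hinner : ∀ a b : EuclideanSpace ℝ (Fin n ⊕ Fin n),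
      ⟪a, b⟫ = (fun i => a i) ⬝ᵥ (fun i => b i) := by
    intro a b
    rw [PiLp.inner_apply]
    simp [dotProduct, RCLike.inner_apply, mul_comm]
  have hskew : ∀ a b : EuclideanSpace ℝ (Fin n ⊕ Fin n), ⟪T a, b⟫ = -⟪a, T b⟫ := by
    intro a b
    rw [hinner, hinner]
    have h1 : (fun i => T a i) = A *ᵥ (fun i => a i) := funext fun k => hTapp a k
    have h2 : (fun i => T b i) = A *ᵥ (fun i => b i) := funext fun k => hTapp b k
    rw [h1, h2, hswap]
  have hinjA : Function.Injective (A.mulVec) :=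
    Matrix.mulVec_injective_iff_isUnit.mpr ((Matrix.isUnit_iff_isUnit_det A).mpr (isUnit_iff_ne_zero.mpr hdetA))
  have hinj : Function.Injective T := by
    intro a b h
    have : A *ᵥ (fun i => a i) = A *ᵥ (fun i => b i) := by
      funext k
      rw [← hTapp a k, ← hTapp b k, h]
    have := hinjA this
    ext k
    exact congrFun this k
  have hrank : Module.finrank ℝ (EuclideanSpace ℝ (Fin n ⊕ Fin n)) = 2 * n := by
    rw [finrank_euclideanSpace]
    simp [two_mul]
  obtain ⟨v, d, hon, hd, hTl, hTr⟩ :=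
    skew_canonical n (EuclideanSpace ℝ (Fin n ⊕ Fin n)) inferInstance inferInstance inferInstance hrank T hskew hinj
  have hAv1 : ∀ i k, (A *ᵥ (fun l => v (Sum.inl i) l)) k = -(d i) * v (Sum.inr i) k := by
    intro i k
    rw [← hTapp]
    rw [hTl i]
    rfl
  have hAv2 : ∀ i k, (A *ᵥ (fun l => v (Sum.inr i) l)) k = d i * v (Sum.inl i) k := by
    intro i k
    rw [← hTapp]
    rw [hTr i]
    rfl
  -- the orthogonal matrix O and canonical form C
  set O : Matrix (Fin n ⊕ Fin n) (Fin n ⊕ Fin n) ℝ := Matrix.of fun k j => v j k with hO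
  set C : Matrix (Fin n ⊕ Fin n) (Fin n ⊕ Fin n) ℝ :=
    Matrix.fromBlocks 0 (Matrix.diagonal d) (-(Matrix.diagonal d)) 0 with hC
  have hOO : Oᵀ * O = 1 := by
    ext i j
    rw [Matrix.mul_apply, Matrix.one_apply]
    have h := orthonormal_iff_ite.mp hon i j
    rw [PiLp.inner_apply] at h
    simpa [RCLike.inner_apply, hO, mul_comm] using h
  have hAO : A * O = O * C := by
    ext k j
    rcases j with i | i
    · have hl : (A * O) k (Sum.inl i) = (A *ᵥ (fun l => v (Sum.inl i) l)) k := rfl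
      rw [hl, hAv1 i]
      rw [Matrix.mul_apply, Fintype.sum_sum_type]
      simp [hC, hO, Matrix.diagonal_apply, mul_ite, Finset.sum_ite_eq', mul_comm]
    · have hl : (A * O) k (Sum.inr i) = (A *ᵥ (fun l => v (Sum.inr i) l)) k := rfl
      rw [hl, hAv2 i]
      rw [Matrix.mul_apply, Fintype.sum_sum_type]
      simp [hC, hO, Matrix.diagonal_apply, mul_ite, Finset.sum_ite_eq', mul_comm]
  have hOAO : Oᵀ * (A * O) = C := by
    rw [hAO, ← Matrix.mul_assoc, hOO, Matrix.one_mul]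
  -- final assembly
  set e : Fin n → ℝ := fun i => (Real.sqrt (d i))⁻¹ with he
  have hsd : ∀ i, Real.sqrt (d i) ≠ 0 := fun i => (Real.sqrt_pos.mpr (hd i)).ne'
  set Eo : Matrix (Fin n ⊕ Fin n) (Fin n ⊕ Fin n) ℝ :=
    Matrix.fromBlocks (Matrix.diagonal e) 0 0 (Matrix.diagonal e) with hEo
  have hEsym : Eoᵀ = Eo := by
    rw [hEo, Matrix.fromBlocks_transpose]
    simp [Matrix.diagonal_transpose]
  set M : Matrix (Fin n ⊕ Fin n) (Fin n ⊕ Fin n) ℝ := Eo * Oᵀ * R with hM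
  have hMt : Mᵀ = R * (O * Eo) := by
    rw [hM, Matrix.transpose_mul, Matrix.transpose_mul, Matrix.transpose_transpose,
      hRsym, hEsym]
  refine ⟨M, fun i => (d i)⁻¹, ?_, fun i => inv_pos.mpr (hd i), ?_⟩
  · have key : M * Jstd n * Mᵀ = Eo * ((Oᵀ * (A * O)) * Eo) := by
      rw [hMt, hM, hA]
      simp only [Matrix.mul_assoc]
    rw [key, hOAO, ← Matrix.mul_assoc, hC, hEo, Matrix.fromBlocks_multiply,
      Matrix.fromBlocks_multiply]
    have hede : (fun i => e i * d i * e i) = fun _ => (1 : ℝ) := by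
      funext i
      rw [he]
      rw [show (Real.sqrt (d i))⁻¹ * d i * (Real.sqrt (d i))⁻¹
          = d i / (Real.sqrt (d i) * Real.sqrt (d i)) by ring,
        Real.mul_self_sqrt (hd i).le, div_self (hd i).ne']
    simp only [Matrix.mul_zero, Matrix.zero_mul, add_zero, zero_add, Matrix.neg_mul,
      Matrix.mul_neg, neg_zero, Matrix.diagonal_mul_diagonal]
    rw [hede, Matrix.diagonal_one]
    rfl
  · have key : M * S * Mᵀ = Eo * (Oᵀ * (R * (S * (R * (O * Eo))))) := by
      rw [hMt, hM]
      simp only [Matrix.mul_assoc]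
    have hmid : R * (S * (R * (O * Eo))) = (R * (S * R)) * (O * Eo) := by
      simp only [Matrix.mul_assoc]
    rw [key, hmid, hRSR, Matrix.one_mul,
      show Oᵀ * (O * Eo) = (Oᵀ * O) * Eo from (Matrix.mul_assoc _ _ _).symm,
      hOO, Matrix.one_mul, hEo, Matrix.fromBlocks_multiply]
    have hee : (fun i => e i * e i) = fun i => (d i)⁻¹ := by
      funext i
      rw [he, ← mul_inv, Real.mul_self_sqrt (hd i).le]
    simp only [Matrix.mul_zero, Matrix.zero_mul, add_zero, zero_add,
      Matrix.diagonal_mul_diagonal, hee]
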